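/- Let X be a Hausdorff space, I ⊆ ℝ an interval closed and bounded on the left with left endpoint t₀, 𝒳 = C_loc(I, X), and 𝒰 ⊆ 𝒳 with Π_{t₀}𝒰 = X. Suppose K ⊆ X is compact and Π_{t₀}⁻¹(K) ∩ 𝒰 is compact in 𝒳. Then for every tight Borel probability measure μ₀ on X carried by K, there exists a tight Borel probability measure ρ on 𝒳, carried by the compact set Π_{t₀}⁻¹(K) ∩ 𝒰, with push-forward (Π_{t₀})ρ = μ₀. -/

import Mathlib

open MeasureTheory Topology Set BoundedContinuousFunction NNReal

section Helpers

variable {α β : Type*}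

lemma innerRegular_map' [TopologicalSpace α] [TopologicalSpace β] [T2Space β]
    [MeasurableSpace α] [MeasurableSpace β] [OpensMeasurableSpace β]
    {f : α → β} (hf : Continuous f) (hfm : Measurable f) {ν : Measure α}
    (hν : ν.InnerRegularWRT IsCompact MeasurableSet) :
    (ν.map f).InnerRegularWRT IsCompact MeasurableSet := by
  intro B hB r hr
  rw [Measure.map_apply hfm hB] at hr
  obtain ⟨C, hCB, hC, hrC⟩ := hν (hfm hB) r hr
  refine ⟨f '' C, ?_, hC.image hf, ?_⟩
  · exact (Set.image_mono hCB).trans (Set.image_preimage_subset _ _)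
  · rw [Measure.map_apply hfm ((hC.image hf).isClosed.measurableSet)]
    exact hrC.trans_le (measure_mono (Set.subset_preimage_image _ _))

lemma measure_ext_of_innerRegular' [TopologicalSpace α] [MeasurableSpace α]
    {μ ν : Measure α} (hμ : μ.InnerRegularWRT IsCompact MeasurableSet)
    (hν : ν.InnerRegularWRT IsCompact MeasurableSet)
    (h : ∀ C : Set α, IsCompact C → μ C = ν C) : μ = ν := by
  ext B hB
  rw [hμ.measure_eq_iSup hB, hν.measure_eq_iSup hB]
  exact iSup_congr fun C => iSup_congr fun _ => iSup_congr fun hC => h C hC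

end Helpers

section BcfContent

variable {S : Type*} [TopologicalSpace S] [CompactSpace S] [T2Space S]

open TopologicalSpace

/-- the Riesz content built from bounded continuous functions on a compact space -/
noncomputable def bcfContent (Λ : (S →ᵇ ℝ≥0) →ₗ[ℝ≥0] ℝ≥0) : Compacts S → ℝ≥0 := fun K =>
  sInf (Λ '' { f : S →ᵇ ℝ≥0 | ∀ x ∈ K, (1 : ℝ≥0) ≤ f x })

lemma bcfContent_image_nonempty (Λ : (S →ᵇ ℝ≥0) →ₗ[ℝ≥0] ℝ≥0) (K : Compacts S) :
    (Λ '' { f : S →ᵇ ℝ≥0 | ∀ x ∈ K, (1 : ℝ≥0) ≤ f x }).Nonempty :=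
  ⟨Λ 1, 1, fun _ _ => le_rfl, rfl⟩

lemma bcfContent_le (Λ : (S →ᵇ ℝ≥0) →ₗ[ℝ≥0] ℝ≥0) {K : Compacts S} {f : S →ᵇ ℝ≥0}
    (h : ∀ x ∈ K, (1 : ℝ≥0) ≤ f x) : bcfContent Λ K ≤ Λ f :=
  csInf_le (OrderBot.bddBelow _) ⟨f, ⟨h, rfl⟩⟩

lemma bcfContent_mono (Λ : (S →ᵇ ℝ≥0) →ₗ[ℝ≥0] ℝ≥0) {K₁ K₂ : Compacts S} (h : K₁ ≤ K₂) :
    bcfContent Λ K₁ ≤ bcfContent Λ K₂ :=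
  csInf_le_csInf (OrderBot.bddBelow _) (bcfContent_image_nonempty Λ K₂)
    (by rintro _ ⟨f, hf, rfl⟩; exact ⟨f, fun x hx => hf x (h hx), rfl⟩)

lemma exists_lt_bcfContent_add_pos (Λ : (S →ᵇ ℝ≥0) →ₗ[ℝ≥0] ℝ≥0) (K : Compacts S) {ε : ℝ≥0}
    (εpos : 0 < ε) :
    ∃ f : S →ᵇ ℝ≥0, (∀ x ∈ K, (1 : ℝ≥0) ≤ f x) ∧ Λ f < bcfContent Λ K + ε := by
  obtain ⟨α, ⟨⟨f, f_hyp⟩, α_hyp⟩⟩ :=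
    exists_lt_of_csInf_lt (bcfContent_image_nonempty Λ K)
      (lt_add_of_pos_right (bcfContent Λ K) εpos)
  refine ⟨f, f_hyp.left, ?_⟩
  rw [f_hyp.right]
  exact α_hyp

/-- the functional transported to compactly supported functions -/
noncomputable def bcfToCc (Λ : (S →ᵇ ℝ≥0) →ₗ[ℝ≥0] ℝ≥0) :
    CompactlySupportedContinuousMap S ℝ≥0 →ₗ[ℝ≥0] ℝ≥0 :=
  Λ.comp
    ({ toFun := fun g => g.toBoundedContinuousFunction,
       map_add' := fun _ _ => rfl,
       map_smul' := fun _ _ => rfl } : CompactlySupportedContinuousMap S ℝ≥0 →ₗ[ℝ≥0] (S →ᵇ ℝ≥0))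

lemma bcfContent_eq (Λ : (S →ᵇ ℝ≥0) →ₗ[ℝ≥0] ℝ≥0) (K : Compacts S) :
    bcfContent Λ K = rieszContentAux (bcfToCc Λ) K := by
  unfold bcfContent rieszContentAux
  congr 1
  ext b
  constructor
  · rintro ⟨f, hf, rfl⟩
    exact ⟨⟨f.toContinuousMap, HasCompactSupport.of_compactSpace _⟩, hf, rfl⟩
  · rintro ⟨g, hg, rfl⟩
    exact ⟨g.toBoundedContinuousFunction, hg, rfl⟩

lemma bcfContent_sup_le (Λ : (S →ᵇ ℝ≥0) →ₗ[ℝ≥0] ℝ≥0) (K1 K2 : Compacts S) :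
    bcfContent Λ (K1 ⊔ K2) ≤ bcfContent Λ K1 + bcfContent Λ K2 := by
  rw [bcfContent_eq, bcfContent_eq, bcfContent_eq]
  exact rieszContentAux_sup_le _ K1 K2

end BcfContent

section Lift

variable {S Y : Type*} [TopologicalSpace S] [TopologicalSpace Y]
  [CompactSpace S] [T2Space S] [CompactSpace Y] [T2Space Y]
  [MeasurableSpace S] [BorelSpace S] [MeasurableSpace Y] [BorelSpace Y]
  [Nonempty S]

open TopologicalSpace
open scoped ENNReal

lemma hahn_step'
    (φ : C(S, Y)) (hφ : Function.Surjective φ)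
    (μ : Measure Y) [IsProbabilityMeasure μ] :
    ∃ Λ : (S →ᵇ ℝ) →ₗ[ℝ] ℝ,
      (∀ g : Y →ᵇ ℝ, Λ (g.compContinuous φ) = ∫ y, g y ∂μ) ∧
      (∀ h : S →ᵇ ℝ, Λ h ≤ ⨆ s, h s) := by
  classical
  have hble : ∀ h : S →ᵇ ℝ, BddAbove (Set.range ⇑h) := fun h =>
    h.isBounded_range.bddAbove
  have hple : ∀ (h : S →ᵇ ℝ) (s : S), h s ≤ ⨆ s, h s := fun h s => le_ciSup (hble h) s
  set p : (S →ᵇ ℝ) → ℝ := fun h => ⨆ s, h s with hp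
  have hphom : ∀ c : ℝ, 0 < c → ∀ h : S →ᵇ ℝ, p (c • h) = c * p h := by
    intro c hc h
    have hcs : ∀ s : S, (c • h) s = c * h s := fun s => rfl
    simp only [hp, hcs]
    rw [← Real.mul_iSup_of_nonneg hc.le]
  have hpadd : ∀ h k : S →ᵇ ℝ, p (h + k) ≤ p h + p k := by
    intro h k
    refine ciSup_le fun s => ?_
    exact add_le_add (hple h s) (hple k s)
  -- the pullback linear map
  let T : (Y →ᵇ ℝ) →ₗ[ℝ] (S →ᵇ ℝ) :=
    { toFun := fun g => g.compContinuous φ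
      map_add' := fun g₁ g₂ => by ext s; simp
      map_smul' := fun c g => by ext s; simp }
  have hTapp : ∀ (g : Y →ᵇ ℝ) (s : S), T g s = g (φ s) := fun g s => rfl
  have hT : Function.Injective T := by
    intro g₁ g₂ h
    ext y
    obtain ⟨s, rfl⟩ := hφ y
    exact DFunLike.congr_fun h s
  let e := LinearEquiv.ofInjective T hT
  let J : (Y →ᵇ ℝ) →ₗ[ℝ] ℝ :=
    { toFun := fun g => ∫ y, g y ∂μ
      map_add' := fun g₁ g₂ => integral_add (g₁.integrable μ) (g₂.integrable μ)
      map_smul' := fun c g => by simpa using integral_smul c (fun y => g y) }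
  let Λ₀ : LinearMap.range T →ₗ[ℝ] ℝ := J.comp e.symm.toLinearMap
  have he : ∀ g : Y →ᵇ ℝ, ((e g : LinearMap.range T) : S →ᵇ ℝ) = T g := fun g => rfl
  have hΛ₀ : ∀ g : Y →ᵇ ℝ, Λ₀ ⟨T g, LinearMap.mem_range_self T g⟩ = ∫ y, g y ∂μ := by
    intro g
    have h1 : (⟨T g, LinearMap.mem_range_self T g⟩ : LinearMap.range T) = e g :=
      Subtype.ext (he g).symm
    simp only [Λ₀, LinearMap.comp_apply, h1, LinearEquiv.coe_toLinearMap,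
      LinearEquiv.symm_apply_apply]
    rfl
  have hbound : ∀ x : LinearMap.range T, Λ₀ x ≤ p x := by
    rintro ⟨x, hx⟩
    obtain ⟨g, rfl⟩ := hx
    rw [hΛ₀ g]
    have hgle : ∀ y, g y ≤ p (T g) := by
      intro y
      obtain ⟨s, rfl⟩ := hφ y
      exact hple (T g) s
    calc ∫ y, g y ∂μ ≤ ∫ _, p (T g) ∂μ :=
          integral_mono (g.integrable μ) (integrable_const _) hgle
      _ = p (T g) := by simp [integral_const, measure_univ]
  obtain ⟨Λ, hΛext, hΛle⟩ :=
    exists_extension_of_le_sublinear ⟨LinearMap.range T, Λ₀⟩ p hphom hpadd hbound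
  refine ⟨Λ, fun g => ?_, hΛle⟩
  have h2 := hΛext ⟨T g, LinearMap.mem_range_self T g⟩
  exact h2.trans (hΛ₀ g)


lemma exists_lift_of_surjective
    (φ : C(S, Y)) (hφ : Function.Surjective φ)
    (μ : Measure Y) [IsProbabilityMeasure μ]
    (hreg : μ.InnerRegularWRT IsCompact MeasurableSet) :
    ∃ ν : Measure S, IsProbabilityMeasure ν ∧
      ν.InnerRegularWRT IsCompact MeasurableSet ∧ ν.map φ = μ := by
  obtain ⟨Λ, hΛT, hΛle⟩ := hahn_step' φ hφ μ
  classical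
  -- basic consequences
  have hble : ∀ h : S →ᵇ ℝ, BddAbove (Set.range ⇑h) := fun h => h.isBounded_range.bddAbove
  have hmono : ∀ h₁ h₂ : S →ᵇ ℝ, (∀ s, h₁ s ≤ h₂ s) → Λ h₁ ≤ Λ h₂ := by
    intro h₁ h₂ h
    have h0 : Λ (h₁ - h₂) ≤ 0 :=
      (hΛle _).trans (ciSup_le fun s => by
        simpa using sub_nonpos.mpr (h s))
    have h1 : Λ h₁ - Λ h₂ = Λ (h₁ - h₂) := (map_sub Λ h₁ h₂).symm
    linarith
  have hΛone : Λ 1 = 1 := by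
    have h1 : ((1 : Y →ᵇ ℝ).compContinuous φ) = 1 := by ext s; rfl
    have := hΛT 1
    rw [h1] at this
    simpa using this
  have hΛnonneg : ∀ h : S →ᵇ ℝ, (∀ s, 0 ≤ h s) → 0 ≤ Λ h := by
    intro h hh
    have := hmono 0 h (by simpa using hh)
    simpa using this
  -- the ℝ≥0 version of Λ
  have iso : Isometry ((↑) : ℝ≥0 → ℝ) := fun _ _ => rfl
  set toR : (S →ᵇ ℝ≥0) → (S →ᵇ ℝ) :=
    fun f => BoundedContinuousFunction.comp _ iso.lipschitz f with htoR
  have toR_apply : ∀ (f : S →ᵇ ℝ≥0) (s : S), toR f s = (f s : ℝ) := fun f s => rfl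
  have toR_add : ∀ f₁ f₂ : S →ᵇ ℝ≥0, toR (f₁ + f₂) = toR f₁ + toR f₂ := by
    intro f₁ f₂; ext s; simp [toR_apply]
  let Λ' : (S →ᵇ ℝ≥0) →ₗ[ℝ≥0] ℝ≥0 :=
    { toFun := fun f => ⟨Λ (toR f), hΛnonneg _ (fun s => (f s).2)⟩
      map_add' := fun f₁ f₂ => by
        refine NNReal.coe_injective ?_
        push_cast
        show Λ (toR (f₁ + f₂)) = Λ (toR f₁) + Λ (toR f₂)
        rw [toR_add, map_add]
      map_smul' := fun c f => by
        refine NNReal.coe_injective ?_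
        have hs : toR (c • f) = (c : ℝ) • toR f := by
          ext s
          simp [toR_apply, NNReal.smul_def]
        push_cast
        show Λ (toR (c • f)) = (c : ℝ) * Λ (toR f)
        rw [hs, Λ.map_smul, smul_eq_mul] }
  have hΛ'coe : ∀ f : S →ᵇ ℝ≥0, (Λ' f : ℝ) = Λ (toR f) := fun f => rfl
  have hΛ'mono : ∀ f₁ f₂ : S →ᵇ ℝ≥0, (∀ s, f₁ s ≤ f₂ s) → Λ' f₁ ≤ Λ' f₂ := by
    intro f₁ f₂ h
    rw [← NNReal.coe_le_coe, hΛ'coe, hΛ'coe]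
    exact hmono _ _ fun s => by
      rw [toR_apply, toR_apply]; exact_mod_cast h s
  have hΛ'one : Λ' 1 = 1 := by
    refine NNReal.coe_injective ?_
    rw [hΛ'coe]
    have h1 : toR 1 = 1 := by ext s; simp [toR_apply]
    rw [h1, hΛone]
    rfl
  -- nnrealPart interaction
  have toR_nnrealPart : ∀ u : S →ᵇ ℝ, (∀ s, 0 ≤ u s) → toR u.nnrealPart = u := by
    intro u hu; ext s
    rw [toR_apply]
    simp only [nnrealPart_coeFn_eq, Function.comp_apply]
    exact Real.coe_toNNReal _ (hu s)
  -- the content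
  set lam : Compacts S → ℝ≥0 := bcfContent Λ' with hlam
  have lam_le : ∀ (K : Compacts S) (f : S →ᵇ ℝ≥0), (∀ x ∈ K, (1:ℝ≥0) ≤ f x) → lam K ≤ Λ' f :=
    fun K f h => bcfContent_le Λ' h
  have lam_le_one : ∀ K : Compacts S, lam K ≤ 1 := by
    intro K
    have := lam_le K 1 (fun x _ => by simp)
    rwa [hΛ'one] at this
  have hsupdisj : ∀ K₁ K₂ : Compacts S, Disjoint (K₁ : Set S) (K₂ : Set S) →
      lam (K₁ ⊔ K₂) = lam K₁ + lam K₂ := by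
    intro K₁ K₂ hdisj
    refine le_antisymm (bcfContent_sup_le Λ' K₁ K₂) ?_
    refine le_csInf (bcfContent_image_nonempty Λ' _) ?_
    rintro b ⟨f, hf, rfl⟩
    obtain ⟨g, hg0, hg1, hg01⟩ :=
      exists_continuous_zero_one_of_isClosed K₂.2.isClosed K₁.2.isClosed hdisj.symm
    set G := mkOfCompact g with hG
    set u₁ : S →ᵇ ℝ := toR f * G with hu₁
    have hu₁nn : ∀ s, 0 ≤ u₁ s := by
      intro s
      have := (hg01 s).1
      have h2 : (0:ℝ) ≤ toR f s := (f s).2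
      simpa [hu₁] using (mul_nonneg h2 this : (0:ℝ) ≤ toR f s * G s)
    set u₂ : S →ᵇ ℝ := toR f - u₁ with hu₂
    have hu₂nn : ∀ s, 0 ≤ u₂ s := by
      intro s
      have h2 : (0:ℝ) ≤ toR f s := (f s).2
      have h3 : u₁ s ≤ toR f s := by
        have := (hg01 s).2
        calc u₁ s = toR f s * g s := rfl
          _ ≤ toR f s * 1 := by exact mul_le_mul_of_nonneg_left this h2
          _ = toR f s := mul_one _
      simpa [hu₂] using sub_nonneg.mpr h3
    have h₁ : ∀ x ∈ K₁, (1:ℝ≥0) ≤ u₁.nnrealPart x := by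
      intro x hx
      have hfx : (1:ℝ) ≤ toR f x := by
        have := hf x (Or.inl hx)
        rw [toR_apply]; exact_mod_cast this
      have : (1:ℝ) ≤ u₁ x := by
        have hgx : g x = 1 := hg1 hx
        calc (1:ℝ) ≤ toR f x := hfx
          _ = toR f x * g x := by rw [hgx, mul_one]
          _ = u₁ x := rfl
      simpa [nnrealPart_coeFn_eq] using Real.one_le_toNNReal.mpr this
    have h₂ : ∀ x ∈ K₂, (1:ℝ≥0) ≤ u₂.nnrealPart x := by
      intro x hx
      have hfx : (1:ℝ) ≤ toR f x := by
        have := hf x (Or.inr hx)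
        rw [toR_apply]; exact_mod_cast this
      have : (1:ℝ) ≤ u₂ x := by
        have hgx : g x = 0 := hg0 hx
        have : u₂ x = toR f x - toR f x * g x := rfl
        rw [this, hgx, mul_zero, sub_zero]
        exact hfx
      simpa [nnrealPart_coeFn_eq] using Real.one_le_toNNReal.mpr this
    have hsum : Λ' u₁.nnrealPart + Λ' u₂.nnrealPart = Λ' f := by
      refine NNReal.coe_injective ?_
      push_cast
      rw [hΛ'coe, hΛ'coe, hΛ'coe, toR_nnrealPart u₁ hu₁nn, toR_nnrealPart u₂ hu₂nn]
      rw [← map_add]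
      congr 1
      ext s
      simp [hu₂]
    calc lam K₁ + lam K₂ ≤ Λ' u₁.nnrealPart + Λ' u₂.nnrealPart :=
          add_le_add (lam_le K₁ _ h₁) (lam_le K₂ _ h₂)
      _ = Λ' f := hsum
  -- assemble the content
  let μC : Content S :=
    { toFun := lam
      mono' := fun K₁ K₂ h => bcfContent_mono Λ' h
      sup_disjoint' := fun K₁ K₂ h _ _ => hsupdisj K₁ K₂ h
      sup_le' := bcfContent_sup_le Λ' }
  have hCR : μC.ContentRegular := by
    intro K
    refine le_antisymm (le_iInf fun K' => le_iInf fun hK' =>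
      ENNReal.coe_le_coe.mpr (bcfContent_mono Λ' (hK'.trans interior_subset))) ?_
    refine ENNReal.le_of_forall_pos_le_add fun ε hε _ => ?_
    obtain ⟨f, hfK, hf⟩ := exists_lt_bcfContent_add_pos Λ' K (half_pos hε)
    set δ : ℝ≥0 := (ε/2) / (1 + ε/2) with hδ
    have hδ2 : δ * (1 + ε/2) = ε/2 := div_mul_cancel₀ _ (by positivity)
    have hδpos : 0 < δ := by positivity
    have hcl : IsClosed {x : S | (1:ℝ≥0) ≤ (1+δ) * f x} :=
      isClosed_le continuous_const (continuous_const.mul f.continuous)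
    set K' : Compacts S := ⟨{x : S | (1:ℝ≥0) ≤ (1+δ) * f x}, hcl.isCompact⟩ with hK'
    have hsub : (K : Set S) ⊆ interior (K' : Set S) := by
      have hopen : IsOpen {x : S | (1:ℝ≥0) < (1+δ) * f x} :=
        isOpen_lt continuous_const (continuous_const.mul f.continuous)
      have h1 : (K : Set S) ⊆ {x : S | (1:ℝ≥0) < (1+δ) * f x} := by
        intro x hx
        have h2 : (1+δ) * 1 ≤ (1+δ) * f x := mul_le_mul_right (hfK x hx) _
        have h3 : (1:ℝ≥0) < (1+δ) * 1 := by
          rw [mul_one]; exact lt_add_of_pos_right _ hδpos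
        exact h3.trans_le h2
      exact h1.trans (interior_maximal (fun x (hx : (1:ℝ≥0) < (1+δ) * f x) => le_of_lt hx) hopen)
    refine iInf_le_of_le K' (iInf_le_of_le hsub ?_)
    show ((lam K' : ℝ≥0∞)) ≤ (lam K : ℝ≥0∞) + ε
    rw [← ENNReal.coe_add, ENNReal.coe_le_coe]
    have t1 : lam K' ≤ Λ' ((1+δ) • f) := by
      refine lam_le K' _ ?_
      intro x hx
      have : ((1+δ) • f) x = (1+δ) * f x := rfl
      rw [this]
      exact hx
    have t2 : Λ' ((1+δ) • f) = (1+δ) * Λ' f := by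
      rw [Λ'.map_smul, smul_eq_mul]
    have t3 : (1+δ) * Λ' f ≤ (1+δ) * (lam K + ε/2) := mul_le_mul_right hf.le _
    have t4 : (1+δ) * (lam K + ε/2) ≤ lam K + ε := by
      have e1 : (1+δ) * (lam K + ε/2) = (lam K + ε/2) + δ * (lam K + ε/2) := by ring
      have e2 : δ * (lam K + ε/2) ≤ δ * (1 + ε/2) :=
        mul_le_mul_right (add_le_add_left (lam_le_one K) _) _
      rw [e1, hδ2] at *
      calc (lam K + ε/2) + δ * (lam K + ε/2) ≤ (lam K + ε/2) + ε/2 := by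
            rw [← hδ2]; exact add_le_add_right e2 _
        _ = lam K + ε := by rw [add_assoc, add_halves]
    exact t1.trans (t2.le.trans (t3.trans t4))
  -- the measure
  set ν := μC.measure with hν
  have hlamK : ∀ Kc : Compacts S, ν Kc = lam Kc := fun Kc =>
    μC.measure_eq_content_of_regular hCR Kc
  have hν_univ : ν univ = 1 := by
    have h1 : ν univ = lam ⟨univ, isCompact_univ⟩ := hlamK ⟨univ, isCompact_univ⟩
    have h2 : lam ⟨univ, isCompact_univ⟩ = 1 := by
      refine le_antisymm (lam_le_one _) ?_
      refine le_csInf (bcfContent_image_nonempty Λ' _) ?_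
      rintro b ⟨f, hf, rfl⟩
      have := hΛ'mono 1 f (fun s => by simpa using hf s trivial)
      rwa [hΛ'one] at this
    rw [h1, h2]
    rfl
  haveI hprob : IsProbabilityMeasure ν := ⟨hν_univ⟩
  have hνreg : ν.InnerRegularWRT IsCompact MeasurableSet := by
    intro B hB r hr
    exact hB.exists_lt_isCompact_of_ne_top (measure_ne_top ν B) hr
  -- outer regularity of μ on compacts
  have houter : ∀ (C : Set Y), IsCompact C → ∀ ε : ℝ≥0, ε ≠ 0 →
      ∃ W, IsOpen W ∧ C ⊆ W ∧ μ W ≤ μ C + ε := by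
    intro C hC ε hε
    obtain ⟨E, hEsub, hEcpt, hlt⟩ := hreg.exists_subset_lt_add (ε := (ε : ℝ≥0∞))
      isCompact_empty hC.isClosed.measurableSet.compl (measure_ne_top μ _)
      (ENNReal.coe_ne_zero.mpr hε)
    refine ⟨Eᶜ, hEcpt.isClosed.isOpen_compl, ?_, ?_⟩
    · exact Set.subset_compl_comm.mp hEsub
    · have hcompl1 : μ Cᶜ = 1 - μ C := by
        rw [measure_compl hC.isClosed.measurableSet (measure_ne_top μ C), measure_univ]
      have hcompl2 : μ Eᶜ = 1 - μ E := by
        rw [measure_compl hEcpt.isClosed.measurableSet (measure_ne_top μ E), measure_univ]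
      rw [hcompl2]
      rw [hcompl1] at hlt
      have h2 : (1:ℝ≥0∞) < (μ E + ε) + μ C :=
        (ENNReal.sub_lt_iff_lt_right (measure_ne_top μ C) prob_le_one).mp hlt
      rw [tsub_le_iff_left]
      calc (1:ℝ≥0∞) ≤ (μ E + ε) + μ C := h2.le
        _ = μ E + (μ C + ε) := by ring
  -- key identity
  have key : ∀ C : Set Y, IsCompact C → ν (⇑φ ⁻¹' C) = μ C := by
    intro C hC
    have hCcl : IsClosed C := hC.isClosed
    have hDcl : IsClosed (⇑φ ⁻¹' C) := hCcl.preimage φ.continuous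
    set D : Compacts S := ⟨⇑φ ⁻¹' C, hDcl.isCompact⟩ with hD
    rw [show ⇑φ ⁻¹' C = (D : Set S) from rfl, hlamK D]
    have hge : μ C ≤ (lam D : ℝ≥0∞) := by
      have h1 : ∀ f : S →ᵇ ℝ≥0, (∀ x ∈ D, (1:ℝ≥0) ≤ f x) → (μ C).toNNReal ≤ Λ' f := by
        intro f hf
        rw [← NNReal.coe_le_coe, hΛ'coe]
        have hreal : ∀ ε : ℝ, 0 < ε → (μ C).toReal ≤ Λ (toR f) + ε := by
          intro ε hε
          set U : Set S := {s | 1 - ε < toR f s} with hU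
          have hUopen : IsOpen U := isOpen_lt continuous_const (toR f).continuous
          have hDU : (D : Set S) ⊆ U := by
            intro s hs
            have h2 : (1:ℝ) ≤ toR f s := by
              rw [toR_apply]; exact_mod_cast hf s hs
            show 1 - ε < toR f s
            linarith
          have hA : IsCompact (⇑φ '' Uᶜ) := (hUopen.isClosed_compl.isCompact).image φ.continuous
          have hdisj : Disjoint (⇑φ '' Uᶜ) C := by
            rw [Set.disjoint_left]
            rintro y ⟨s, hsU, rfl⟩ hyC
            exact hsU (hDU hyC)
          obtain ⟨g, hg0, hg1, hg01⟩ :=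
            exists_continuous_zero_one_of_isClosed hA.isClosed hCcl hdisj
          set G := mkOfCompact g with hG
          have hpt : ∀ s : S, (G.compContinuous φ) s ≤ (toR f + ε • (1 : S →ᵇ ℝ)) s := by
            intro s
            have hval : (G.compContinuous φ) s = g (φ s) := rfl
            have hrhs : (toR f + ε • (1 : S →ᵇ ℝ)) s = toR f s + ε := by
              simp
            rw [hval, hrhs]
            by_cases hsU : s ∈ U
            · have hle1 : g (φ s) ≤ 1 := (hg01 (φ s)).2
              have h2 : 1 - ε < toR f s := hsU
              linarith
            · have hmem : φ s ∈ ⇑φ '' Uᶜ := ⟨s, hsU, rfl⟩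
              have h0 : g (φ s) = 0 := hg0 hmem
              have h2 : (0:ℝ) ≤ toR f s := (f s).2
              rw [h0]; linarith
          have hΛpt : Λ (G.compContinuous φ) ≤ Λ (toR f) + ε := by
            have := hmono _ _ hpt
            rwa [map_add, Λ.map_smul, hΛone, smul_eq_mul, mul_one] at this
          have hint : (μ C).toReal ≤ Λ (G.compContinuous φ) := by
            rw [hΛT G]
            have hind : ∀ y, C.indicator (fun _ => (1:ℝ)) y ≤ G y := by
              intro y
              by_cases hy : y ∈ C
              · rw [Set.indicator_of_mem hy]
                have h3 : g y = 1 := hg1 hy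
                show (1:ℝ) ≤ G y
                rw [show G y = g y from rfl, h3]
              · rw [Set.indicator_of_notMem hy]
                exact (hg01 y).1
            calc (μ C).toReal = ∫ y, C.indicator (fun _ => (1:ℝ)) y ∂μ := by
                  rw [integral_indicator_const (1:ℝ) hCcl.measurableSet]; simp; rfl
              _ ≤ ∫ y, G y ∂μ := integral_mono
                  ((integrable_const (1:ℝ)).indicator hCcl.measurableSet) (G.integrable μ) hind
          linarith
        have h6 : (μ C).toReal ≤ Λ (toR f) := le_of_forall_pos_le_add hreal
        exact h6
      have h2 : (μ C).toNNReal ≤ lam D :=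
        le_csInf (bcfContent_image_nonempty Λ' D)
          (by rintro b ⟨f, hf, rfl⟩; exact h1 f hf)
      calc μ C = ((μ C).toNNReal : ℝ≥0∞) := (ENNReal.coe_toNNReal (measure_ne_top μ C)).symm
        _ ≤ (lam D : ℝ≥0∞) := ENNReal.coe_le_coe.mpr h2
    have hle : (lam D : ℝ≥0∞) ≤ μ C := by
      refine ENNReal.le_of_forall_pos_le_add fun ε hε _ => ?_
      obtain ⟨W, hWopen, hCW, hWle⟩ := houter C hC ε hε.ne'
      have hdisj : Disjoint Wᶜ C := by
        rw [Set.disjoint_left]; intro y hy hyC; exact hy (hCW hyC)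
      obtain ⟨g, hg0, hg1, hg01⟩ :=
        exists_continuous_zero_one_of_isClosed hWopen.isClosed_compl hCcl hdisj
      set G := mkOfCompact g with hG
      set f : S →ᵇ ℝ≥0 := (G.compContinuous φ).nnrealPart with hf
      have htest : ∀ x ∈ D, (1:ℝ≥0) ≤ f x := by
        intro x hx
        have hfx : f x = Real.toNNReal ((G.compContinuous φ) x) := rfl
        rw [hfx]
        refine Real.one_le_toNNReal.mpr ?_
        rw [show (G.compContinuous φ) x = g (φ x) from rfl, hg1 hx]
        simp
      have h3 : lam D ≤ Λ' f := lam_le D f htest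
      have h4 : (Λ' f : ℝ) ≤ (μ W).toReal := by
        rw [hΛ'coe, hf, toR_nnrealPart _ (fun s => (hg01 (φ s)).1), hΛT G]
        have hind : ∀ y, G y ≤ W.indicator (fun _ => (1:ℝ)) y := by
          intro y
          by_cases hy : y ∈ W
          · rw [Set.indicator_of_mem hy]; exact (hg01 y).2
          · rw [Set.indicator_of_notMem hy]
            have h5 : g y = 0 := hg0 hy
            rw [show G y = g y from rfl, h5]
        calc ∫ y, G y ∂μ ≤ ∫ y, W.indicator (fun _ => (1:ℝ)) y ∂μ :=
              integral_mono (G.integrable μ)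
                ((integrable_const (1:ℝ)).indicator hWopen.measurableSet) hind
          _ = (μ W).toReal := by rw [integral_indicator_const (1:ℝ) hWopen.measurableSet]; simp; rfl
      have h5 : (lam D : ℝ≥0∞) ≤ μ W := by
        rw [← ENNReal.coe_toNNReal (measure_ne_top μ W), ENNReal.coe_le_coe,
          ← NNReal.coe_le_coe]
        exact le_trans (NNReal.coe_le_coe.mpr h3) h4
      exact h5.trans hWle
    exact le_antisymm hle hge
  refine ⟨ν, hprob, hνreg, ?_⟩
  refine measure_ext_of_innerRegular'
    (innerRegular_map' φ.continuous φ.continuous.measurable hνreg) hreg ?_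
  intro C hC
  rw [Measure.map_apply φ.continuous.measurable hC.isClosed.measurableSet]
  exact key C hC

end Lift

section Comap

lemma comap_innerRegular' {α : Type*} [TopologicalSpace α] [MeasurableSpace α] [BorelSpace α]
    {s : Set α} (hs : IsClosed s) (μ : Measure α)
    (hreg : μ.InnerRegularWRT IsCompact MeasurableSet) :
    (μ.comap (Subtype.val : s → α)).InnerRegularWRT IsCompact MeasurableSet := by
  have emb : MeasurableEmbedding (Subtype.val : s → α) :=
    MeasurableEmbedding.subtype_coe hs.measurableSet
  intro B hB r hr
  rw [emb.comap_apply] at hr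
  obtain ⟨C, hCB, hC, hrC⟩ := hreg (emb.measurableSet_image' hB) r hr
  have hCs : C ⊆ s := hCB.trans (by rintro x ⟨b, _, rfl⟩; exact b.2)
  refine ⟨Subtype.val ⁻¹' C, ?_, ?_, ?_⟩
  · intro x hx
    obtain ⟨b, hbB, hbx⟩ := hCB hx
    rwa [show b = x from Subtype.coe_injective hbx] at hbB
  · rw [Subtype.isCompact_iff, Subtype.image_preimage_coe,
      Set.inter_eq_self_of_subset_right hCs]
    exact hC
  · rw [emb.comap_apply, Subtype.image_preimage_coe,
      Set.inter_eq_self_of_subset_right hCs]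
    exact hrC

end Comap



open MeasureTheory Topology

theorem stmt16 {X : Type*} [TopologicalSpace X] [T2Space X] [MeasurableSpace X] [BorelSpace X]
    (I : Set ℝ) (hI : I.OrdConnected) (t₀ : I) (ht₀ : IsLeast I (t₀ : ℝ))
    [MeasurableSpace C(I, X)] [BorelSpace C(I, X)]
    (𝒰 : Set C(I, X))
    (hsurj : (fun u : C(I, X) => u t₀) '' 𝒰 = Set.univ)
    (K : Set X) (hK : IsCompact K)
    (hcpt : IsCompact ((fun u : C(I, X) => u t₀) ⁻¹' K ∩ 𝒰))
    (μ₀ : Measure X) [IsProbabilityMeasure μ₀]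
    (hμreg : μ₀.InnerRegularWRT IsCompact MeasurableSet)
    (hμK : μ₀ Kᶜ = 0) :
    ∃ ρ : Measure C(I, X), IsProbabilityMeasure ρ ∧
      ρ.InnerRegularWRT IsCompact MeasurableSet ∧
      ρ (((fun u : C(I, X) => u t₀) ⁻¹' K ∩ 𝒰)ᶜ) = 0 ∧
      ρ.map (fun u : C(I, X) => u t₀) = μ₀ := by
  classical
  have hKcl : IsClosed K := hK.isClosed
  have hKm : MeasurableSet K := hKcl.measurableSet
  have hμK1 : μ₀ K = 1 := (prob_compl_eq_zero_iff hKm).mp hμK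
  set Pi : C(I, X) → X := fun u => u t₀ with hPi
  have hPicont : Continuous Pi := continuous_eval_const t₀
  set S : Set C(I, X) := Pi ⁻¹' K ∩ 𝒰 with hS
  have hScl : IsClosed S := hcpt.isClosed
  have hSm : MeasurableSet S := hScl.measurableSet
  haveI : CompactSpace S := isCompact_iff_compactSpace.mp hcpt
  haveI : CompactSpace K := isCompact_iff_compactSpace.mp hK
  have hpre : ∀ x ∈ K, ∃ u : C(I, X), u ∈ 𝒰 ∧ Pi u = x := by
    intro x _
    have hx' : x ∈ (fun u : C(I, X) => u t₀) '' 𝒰 := by rw [hsurj]; trivial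
    obtain ⟨u, hu, he⟩ := hx'
    exact ⟨u, hu, he⟩
  have hKne : K.Nonempty := by
    by_contra h
    rw [Set.not_nonempty_iff_eq_empty] at h
    rw [h] at hμK1
    simp at hμK1
  haveI hSne : Nonempty S := by
    obtain ⟨x, hx⟩ := hKne
    obtain ⟨u, hu, hux⟩ := hpre x hx
    exact ⟨⟨u, ⟨by simp only [Set.mem_preimage, hux]; exact hx, hu⟩⟩⟩
  let φ : C(S, K) := ⟨fun u => ⟨Pi u.1, u.2.1⟩,
    Continuous.subtype_mk (hPicont.comp continuous_subtype_val) _⟩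
  have hφsurj : Function.Surjective φ := by
    rintro ⟨x, hx⟩
    obtain ⟨u, hu, hux⟩ := hpre x hx
    refine ⟨⟨u, ⟨by simp only [Set.mem_preimage, hux]; exact hx, hu⟩⟩, ?_⟩
    exact Subtype.ext hux
  have embK : MeasurableEmbedding (Subtype.val : K → X) :=
    MeasurableEmbedding.subtype_coe hKm
  set μ : Measure K := μ₀.comap Subtype.val with hμ
  haveI : IsProbabilityMeasure μ := by
    refine ⟨?_⟩
    rw [hμ, embK.comap_apply, Set.image_univ, Subtype.range_coe]
    exact hμK1
  have hμreg' : μ.InnerRegularWRT IsCompact MeasurableSet :=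
    comap_innerRegular' hKcl μ₀ hμreg
  obtain ⟨ν, hνprob, hνreg, hνmap⟩ := exists_lift_of_surjective φ hφsurj μ hμreg'
  refine ⟨ν.map (Subtype.val : S → C(I, X)), ?_, ?_, ?_, ?_⟩
  · exact Measure.isProbabilityMeasure_map measurable_subtype_coe.aemeasurable
  · exact innerRegular_map' continuous_subtype_val measurable_subtype_coe hνreg
  · rw [Measure.map_apply measurable_subtype_coe hSm.compl]
    have hempty : (Subtype.val : S → C(I, X)) ⁻¹' Sᶜ = ∅ := by
      rw [Set.eq_empty_iff_forall_notMem]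
      intro u hu
      exact hu u.2
    rw [hempty, measure_empty]
  · have hcomm : Pi ∘ (Subtype.val : S → C(I, X)) = (Subtype.val : K → X) ∘ φ := rfl
    rw [Measure.map_map hPicont.measurable measurable_subtype_coe, hcomm,
      ← Measure.map_map measurable_subtype_coe φ.continuous.measurable, hνmap, hμ,
      embK.map_comap, Subtype.range_coe]
    refine Measure.restrict_eq_self_of_ae_mem ?_
    exact ae_iff.mpr hμK
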